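/- Let k > 0 and let p(t) = C + C₊e^{kt} + C₋e^{-kt} be positive for all t ∈ ℝ. If (C₊, C₋) ≠ (0,0), then the function τ(t) = ∫₀ᵗ dξ/p(ξ) is either bounded above or bounded below (or explodes in finite time), hence is not a surjection from ℝ onto ℝ. Consequently, if τ is a strictly increasing surjection ℝ → ℝ, then C₊ = C₋ = 0 and p is a positive constant. -/

import Mathlib

open Real intervalIntegral

/-- If `C + Cp e^{kt} + Cm e^{-kt}` is positive for all `t`, then `Cp ≥ 0`. -/
lemma aux_nonneg (k C Cp Cm : ℝ) (hk : 0 < k)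
    (hpos : ∀ t, 0 < C + Cp * Real.exp (k * t) + Cm * Real.exp (-k * t)) :
    0 ≤ Cp := by
  by_contra h
  push_neg at h
  set A : ℝ := (C + |Cm| + 1) / (-Cp) with hA
  set t : ℝ := (1 / k) * Real.log (max 1 A) with htdef
  have h1 : (0 : ℝ) < max 1 A := lt_of_lt_of_le one_pos (le_max_left _ _)
  have hkt : k * t = Real.log (max 1 A) := by
    rw [htdef]; field_simp
  have he : Real.exp (k * t) = max 1 A := by rw [hkt, Real.exp_log h1]
  have h2 : C + |Cm| + 1 ≤ -Cp * Real.exp (k * t) := by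
    rw [he]
    have := le_max_right 1 A
    rw [hA] at this
    calc C + |Cm| + 1 = ((C + |Cm| + 1) / (-Cp)) * (-Cp) := by
          field_simp [h.ne]
      _ ≤ max 1 A * (-Cp) := by
          apply mul_le_mul_of_nonneg_right _ (by linarith)
          rw [hA]; exact le_max_right _ _
      _ = -Cp * max 1 A := by ring
  have ht0 : 0 ≤ t := by
    rw [htdef]
    apply mul_nonneg (by positivity)
    exact Real.log_nonneg (le_max_left _ _)
  have h3 : Real.exp (-k * t) ≤ 1 := by
    apply Real.exp_le_one_iff.mpr
    nlinarith
  have h4 : Cm * Real.exp (-k * t) ≤ |Cm| := by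
    have hep : (0 : ℝ) < Real.exp (-k * t) := Real.exp_pos _
    have := le_abs_self Cm
    have habs : (0:ℝ) ≤ |Cm| := abs_nonneg Cm
    nlinarith
  have := hpos t
  nlinarith

/-- If `Cp > 0` and `Cm ≥ 0`, the integral `∫₀ᵗ dξ/p(ξ)` is bounded above,
hence not surjective. -/
lemma aux_not_surj (k C Cp Cm : ℝ) (hk : 0 < k) (hCp : 0 < Cp) (hCm : 0 ≤ Cm)
    (hpos : ∀ t, 0 < C + Cp * Real.exp (k * t) + Cm * Real.exp (-k * t)) :
    ¬ Function.Surjective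
      (fun t => ∫ ξ in (0:ℝ)..t, 1 / (C + Cp * Real.exp (k * ξ) + Cm * Real.exp (-k * ξ))) := by
  set q : ℝ → ℝ := fun ξ => C + Cp * Real.exp (k * ξ) + Cm * Real.exp (-k * ξ) with hq
  have hqc : Continuous q := by fun_prop
  have hqpos : ∀ ξ, 0 < q ξ := hpos
  have hcont : Continuous (fun ξ => 1 / q ξ) :=
    continuous_const.div hqc (fun ξ => (hqpos ξ).ne')
  have hInt : ∀ a b : ℝ, IntervalIntegrable (fun ξ => 1 / q ξ) MeasureTheory.volume a b :=
    fun a b => hcont.intervalIntegrable a b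
  have hIntE : ∀ a b : ℝ, IntervalIntegrable (fun ξ => (2 / Cp) * Real.exp (-k * ξ))
      MeasureTheory.volume a b := fun a b => (by fun_prop : Continuous _).intervalIntegrable a b
  -- Choose T with exp(kT) ≥ 2(|C|+1)/Cp
  set T : ℝ := (1 / k) * Real.log (max 1 (2 * (|C| + 1) / Cp)) with hT
  have h1 : (0 : ℝ) < max 1 (2 * (|C| + 1) / Cp) := lt_of_lt_of_le one_pos (le_max_left _ _)
  have heT : Real.exp (k * T) = max 1 (2 * (|C| + 1) / Cp) := by
    rw [hT, show k * ((1/k) * Real.log (max 1 (2 * (|C| + 1) / Cp)))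
      = Real.log (max 1 (2 * (|C| + 1) / Cp)) by field_simp, Real.exp_log h1]
  have heT2 : 2 * (|C| + 1) / Cp ≤ Real.exp (k * T) := heT ▸ le_max_right _ _
  have heT3 : 2 * (|C| + 1) ≤ Cp * Real.exp (k * T) := by
    rw [div_le_iff₀ hCp] at heT2; linarith
  -- pointwise bound for ξ ≥ T
  have hbound : ∀ ξ ≥ T, 1 / q ξ ≤ (2 / Cp) * Real.exp (-k * ξ) := by
    intro ξ hξ
    have hm : Real.exp (k * T) ≤ Real.exp (k * ξ) :=
      Real.exp_le_exp.mpr (by nlinarith)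
    have hqe : Cp / 2 * Real.exp (k * ξ) ≤ q ξ := by
      have h5 : 0 ≤ Cm * Real.exp (-k * ξ) := mul_nonneg hCm (Real.exp_pos _).le
      have habs : -C ≤ |C| := neg_le_abs C
      nlinarith
    have hkey : Real.exp (-k * ξ) * Real.exp (k * ξ) = 1 := by
      rw [← Real.exp_add]; norm_num
    rw [div_le_iff₀ (hqpos ξ)]
    have hep : (0 : ℝ) < Real.exp (-k * ξ) := Real.exp_pos _
    have h2cp : (0 : ℝ) < 2 / Cp := by positivity
    have hone : 2 / Cp * Real.exp (-k * ξ) * (Cp / 2 * Real.exp (k * ξ)) = 1 := by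
      rw [show 2 / Cp * Real.exp (-k * ξ) * (Cp / 2 * Real.exp (k * ξ))
        = (Cp / Cp) * (Real.exp (-k * ξ) * Real.exp (k * ξ)) by ring, div_self hCp.ne', hkey]
      ring
    have hmul := mul_le_mul_of_nonneg_left hqe
      (le_of_lt (by positivity : (0:ℝ) < 2 / Cp * Real.exp (-k * ξ)))
    linarith
  -- bound on the exponential integral
  have hexp_int : ∀ t ≥ T, (∫ ξ in T..t, Real.exp (-k * ξ))
      = (1/k) * Real.exp (-k * T) - (1/k) * Real.exp (-k * t) := by
    intro t ht
    have hderiv : ∀ ξ ∈ Set.uIcc T t, HasDerivAt (fun x => -(1/k) * Real.exp (-k * x))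
        (Real.exp (-k * ξ)) ξ := by
      intro ξ _
      have h1 : HasDerivAt (fun x : ℝ => -k * x) (-k) ξ := by
        simpa using (hasDerivAt_id ξ).const_mul (-k)
      have h2 : HasDerivAt (fun x => Real.exp (-k * x)) (Real.exp (-k * ξ) * (-k)) ξ :=
        (Real.hasDerivAt_exp (-k * ξ)).comp ξ h1
      have h3 := h2.const_mul (-(1/k))
      refine h3.congr_deriv ?_
      field_simp
    rw [intervalIntegral.integral_eq_sub_of_hasDerivAt hderiv
      ((by fun_prop : Continuous fun ξ => Real.exp (-k * ξ)).intervalIntegrable T t)]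
    ring
  -- the global bound
  set M : ℝ := (∫ ξ in (0:ℝ)..T, 1 / q ξ) + (2 / Cp) * ((1/k) * Real.exp (-k * T)) with hM
  have hub : ∀ t, (∫ ξ in (0:ℝ)..t, 1 / q ξ) ≤ M := by
    intro t
    rcases le_total t T with hle | hge
    · have hsplit : (∫ ξ in (0:ℝ)..t, 1 / q ξ) + (∫ ξ in t..T, 1 / q ξ)
          = ∫ ξ in (0:ℝ)..T, 1 / q ξ :=
        intervalIntegral.integral_add_adjacent_intervals (hInt 0 t) (hInt t T)
      have hnn : 0 ≤ ∫ ξ in t..T, 1 / q ξ :=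
        intervalIntegral.integral_nonneg hle (fun ξ _ => one_div_nonneg.mpr (hqpos ξ).le)
      have hpos2 : 0 ≤ (2 / Cp) * ((1/k) * Real.exp (-k * T)) := by positivity
      rw [hM]; linarith
    · have hsplit : (∫ ξ in (0:ℝ)..T, 1 / q ξ) + (∫ ξ in T..t, 1 / q ξ)
          = ∫ ξ in (0:ℝ)..t, 1 / q ξ :=
        intervalIntegral.integral_add_adjacent_intervals (hInt 0 T) (hInt T t)
      have hcomp : (∫ ξ in T..t, 1 / q ξ) ≤ ∫ ξ in T..t, (2 / Cp) * Real.exp (-k * ξ) := by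
        apply intervalIntegral.integral_mono_on hge (hInt T t) (hIntE T t)
        intro ξ hξ
        exact hbound ξ hξ.1
      have hval : (∫ ξ in T..t, (2 / Cp) * Real.exp (-k * ξ))
          = (2 / Cp) * ((1/k) * Real.exp (-k * T) - (1/k) * Real.exp (-k * t)) := by
        rw [intervalIntegral.integral_const_mul, hexp_int t hge]
      have hep : (0 : ℝ) < Real.exp (-k * t) := Real.exp_pos _
      have h2cp : (0 : ℝ) < 2 / Cp := by positivity
      have hkpos : (0 : ℝ) < 1 / k := by positivity
      have hval2 : 2 / Cp * ((1/k) * Real.exp (-k * T) - (1/k) * Real.exp (-k * t))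
          = 2 / Cp * ((1/k) * Real.exp (-k * T)) - 2 / Cp * ((1/k) * Real.exp (-k * t)) := by
        ring
      have hnn2 : (0:ℝ) ≤ 2 / Cp * ((1/k) * Real.exp (-k * t)) := by positivity
      rw [hM]
      linarith
  intro hsurj
  obtain ⟨t, ht⟩ := hsurj (M + 1)
  have := hub t
  simp only at ht
  rw [ht] at this
  linarith

theorem stmt_7 (k C Cp Cm : ℝ) (hk : 0 < k) (p : ℝ → ℝ)
    (hp : ∀ t, p t = C + Cp * Real.exp (k * t) + Cm * Real.exp (-k * t))
    (hpos : ∀ t, 0 < p t)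
    (τ : ℝ → ℝ) (hτ : ∀ t, τ t = ∫ ξ in (0:ℝ)..t, 1 / p ξ)
    (hmono : StrictMono τ) (hsurj : Function.Surjective τ) :
    Cp = 0 ∧ Cm = 0 ∧ 0 < C := by
  have hq : ∀ t, 0 < C + Cp * Real.exp (k * t) + Cm * Real.exp (-k * t) := by
    intro t; rw [← hp t]; exact hpos t
  have hq' : ∀ t, 0 < C + Cm * Real.exp (k * t) + Cp * Real.exp (-k * t) := by
    intro t
    have := hq (-t)
    rw [show k * (-t) = -k * t by ring, show -k * (-t) = k * t by ring] at this
    linarith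
  have hCp0 : 0 ≤ Cp := aux_nonneg k C Cp Cm hk hq
  have hCm0 : 0 ≤ Cm := aux_nonneg k C Cm Cp hk hq'
  -- surjectivity of the explicit function
  have hτeq : τ = fun t => ∫ ξ in (0:ℝ)..t, 1 / (C + Cp * Real.exp (k * ξ) + Cm * Real.exp (-k * ξ)) := by
    funext t
    rw [hτ t]
    congr 1
    funext ξ
    rw [hp ξ]
  have hsurj1 : Function.Surjective
      (fun t => ∫ ξ in (0:ℝ)..t, 1 / (C + Cp * Real.exp (k * ξ) + Cm * Real.exp (-k * ξ))) := by
    rw [← hτeq]; exact hsurj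
  have hCp : Cp = 0 := by
    by_contra h
    exact aux_not_surj k C Cp Cm hk (lt_of_le_of_ne hCp0 (Ne.symm h)) hCm0 hq hsurj1
  -- reflected function for Cm
  have hrefl : (fun t => ∫ ξ in (0:ℝ)..t, 1 / (C + Cm * Real.exp (k * ξ) + Cp * Real.exp (-k * ξ)))
      = fun t => -τ (-t) := by
    funext t
    rw [hτ (-t)]
    rw [show (∫ ξ in (0:ℝ)..(-t), 1 / p ξ) = - ∫ ξ in (-t)..(0:ℝ), 1 / p ξ from
      (intervalIntegral.integral_symm _ _)]
    rw [neg_neg]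
    rw [show ((-t : ℝ)) = -t by rfl, show (0:ℝ) = -(-0:ℝ) by norm_num]
    rw [← intervalIntegral.integral_comp_neg (fun ξ => 1 / p ξ)]
    simp only [neg_neg, neg_zero]
    congr 1
    funext ξ
    rw [hp (-ξ)]
    rw [show k * (-ξ) = -k * ξ by ring, show -k * (-ξ) = k * ξ by ring]
    ring_nf
  have hsurj2 : Function.Surjective
      (fun t => ∫ ξ in (0:ℝ)..t, 1 / (C + Cm * Real.exp (k * ξ) + Cp * Real.exp (-k * ξ))) := by
    rw [hrefl]
    exact (neg_surjective.comp hsurj).comp neg_surjective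
  have hCm : Cm = 0 := by
    by_contra h
    exact aux_not_surj k C Cm Cp hk (lt_of_le_of_ne hCm0 (Ne.symm h)) hCp0 hq' hsurj2
  refine ⟨hCp, hCm, ?_⟩
  have := hpos 0
  rw [hp 0] at this
  simp [hCp, hCm] at this
  exact this
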